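/- Let J ⊂ (0, ∞) be a nondegenerate interval and let f : J → J be a continuous function satisfying f³(x) = [f(x)]³ / x² for every x ∈ J, where f³ denotes the third iterate of f. Then: (i) if J is bounded and 0 ∉ cl J, then f(x) = x for every x ∈ J; (ii) if J is bounded and 0 ∈ cl J, then there exists c ∈ (0, 1] such that f(x) = c·x for every x ∈ J; (iii) if J is unbounded and 0 ∉ cl J, then there exists c ∈ [1, ∞) such that f(x) = c·x for every x ∈ J; (iv) if J = (0, ∞), then there exists c ∈ (0, ∞) such that either f(x) = c·x for every x ∈ (0, ∞) or f(x) = c / x² for every x ∈ (0, ∞). -/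

import Mathlib

open Set


lemma aux_dichotomy {J : Set ℝ} (hJI : J.OrdConnected) {f : ℝ → ℝ}
    (hfc : ContinuousOn f J) (hinj : Set.InjOn f J) :
    StrictMonoOn f J ∨ StrictAntiOn f J := by
  rcases Classical.em (∃ a ∈ J, ∃ b ∈ J, a < b ∧ f a < f b) with h | h
  · obtain ⟨a, ha, b, hb, hab, hfab⟩ := h
    left
    intro x hx y hy hxy
    set m := min a x with hm
    set M := max b y with hM
    have hmJ : m ∈ J := by rcases min_choice a x with h' | h' <;> rw [hm, h'] <;> assumption
    have hMJ : M ∈ J := by rcases max_choice b y with h' | h' <;> rw [hM, h'] <;> assumption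
    have hmM : m ≤ M := le_trans (le_trans (min_le_left a x) hab.le) (le_max_left b y)
    have hsub : Icc m M ⊆ J := hJI.out hmJ hMJ
    have haI : a ∈ Icc m M := ⟨min_le_left a x, le_trans hab.le (le_max_left b y)⟩
    have hbI : b ∈ Icc m M := ⟨le_trans (min_le_left a x) hab.le, le_max_left b y⟩
    have hxI : x ∈ Icc m M := ⟨min_le_right a x, le_trans hxy.le (le_max_right b y)⟩
    have hyI : y ∈ Icc m M := ⟨le_trans (min_le_right a x) hxy.le, le_max_right b y⟩
    rcases ContinuousOn.strictMonoOn_of_injOn_Icc' hmM (hfc.mono hsub) (hinj.mono hsub) with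
      hmono | hanti
    · exact hmono hxI hyI hxy
    · exact absurd (hanti haI hbI hab) (not_lt.mpr hfab.le)
  · right
    push_neg at h
    intro x hx y hy hxy
    rcases lt_trichotomy (f x) (f y) with h' | h' | h'
    · exact absurd h' (not_lt.mpr (h x hx y hy hxy))
    · exact absurd (hinj hx hy h') hxy.ne
    · exact h'

lemma aux_pow_big (B C M : ℝ) (hC : 0 < C) : ∃ m : ℕ, M < B * m + C * 4 ^ m := by
  obtain ⟨m₀, hm₀⟩ := pow_unbounded_of_one_lt ((|B| + 1) / C) (by norm_num : (1:ℝ) < 2)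
  obtain ⟨m₁, hm₁⟩ := exists_nat_gt (max M 0)
  refine ⟨m₀ + m₁ + 1, ?_⟩
  set m := m₀ + m₁ + 1 with hm
  have h2m : ((|B| + 1) / C) < 2 ^ m := by
    calc ((|B| + 1) / C) < 2 ^ m₀ := hm₀
    _ ≤ 2 ^ m := by apply pow_le_pow_right₀ (by norm_num); omega
  have hB2 : |B| + 1 ≤ C * 2 ^ m := by
    rw [div_lt_iff₀ hC] at h2m; nlinarith
  have hmle : (m : ℝ) ≤ 2 ^ m := by exact_mod_cast (Nat.lt_two_pow_self (n := m)).le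
  have h4 : (4:ℝ) ^ m = 2 ^ m * 2 ^ m := by
    rw [show (4:ℝ) = 2 ^ 2 by norm_num, ← pow_mul, two_mul, pow_add]
  have hMm : M < (m:ℝ) := by
    have h1 : (m₁ : ℝ) ≤ (m : ℝ) := by exact_mod_cast (by omega : m₁ ≤ m)
    exact lt_of_le_of_lt (le_max_left M 0) (lt_of_lt_of_le hm₁ h1)
  have key : (|B| + 1) * m ≤ C * 4 ^ m := by
    calc (|B| + 1) * (m:ℝ) ≤ (|B| + 1) * 2 ^ m := by
          apply mul_le_mul_of_nonneg_left hmle (by positivity)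
    _ ≤ (C * 2 ^ m) * 2 ^ m := by apply mul_le_mul_of_nonneg_right hB2 (by positivity)
    _ = C * 4 ^ m := by rw [h4]; ring
  have hBm : -(|B| * m) ≤ B * m := by
    have := neg_abs_le B
    have hm0 : (0:ℝ) ≤ m := by positivity
    nlinarith
  nlinarith


lemma aux_closed_form (t : ℕ → ℝ) (ht : ∀ n, t (n+3) = 3 * t (n+1) - 2 * t n)
    (A B C : ℝ) (h0 : t 0 = A + C) (h1 : t 1 = A + B - 2*C) (h2 : t 2 = A + 2*B + 4*C) :
    ∀ n, t n = A + B * n + C * (-2:ℝ)^n := by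
  have H : ∀ n, (t n = A + B * n + C * (-2:ℝ)^n) ∧
      (t (n+1) = A + B * (n+1) + C * (-2:ℝ)^(n+1)) ∧
      (t (n+2) = A + B * (n+2) + C * (-2:ℝ)^(n+2)) := by
    intro n
    induction n with
    | zero =>
      refine ⟨by simpa using h0, by rw [h1]; push_cast; ring, by rw [h2]; push_cast; ring⟩
    | succ k ih =>
      refine ⟨by rw [ih.2.1]; push_cast; ring, by rw [ih.2.2]; push_cast; ring, ?_⟩
      have hrec := ht k
      rw [ih.2.1, ih.1] at hrec
      rw [show k + 1 + 2 = k + 3 from rfl, hrec]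
      push_cast
      ring
  exact fun n => (H n).1

lemma aux_closed_form_int (t : ℤ → ℝ) (ht : ∀ n : ℤ, t (n+3) = 3 * t (n+1) - 2 * t n)
    (A B C : ℝ) (h0 : t 0 = A + C) (h1 : t 1 = A + B - 2*C) (h2 : t 2 = A + 2*B + 4*C) :
    ∀ n : ℤ, t n = A + B * n + C * (-2:ℝ)^n := by
  have hne : (-2:ℝ) ≠ 0 := by norm_num
  have key : ∀ n : ℤ, (t n = A + B * n + C * (-2:ℝ)^n) ∧
      (t (n+1) = A + B * (n+1) + C * (-2:ℝ)^(n+1)) ∧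
      (t (n+2) = A + B * (n+2) + C * (-2:ℝ)^(n+2)) := by
    intro n
    induction n using Int.induction_on with
    | zero =>
      refine ⟨by simpa using h0, ?_, ?_⟩
      · rw [show ((0:ℤ)+1) = 1 from rfl, h1, zpow_one]; push_cast; ring
      · rw [show ((0:ℤ)+2) = 2 from rfl, h2, show ((2:ℤ)) = ((2:ℕ):ℤ) from rfl, zpow_natCast]
        push_cast; ring
    | succ k ih =>
      refine ⟨by rw [ih.2.1]; push_cast; ring, by rw [show (k:ℤ)+1+1 = (k:ℤ)+2 by ring, ih.2.2]; push_cast; ring, ?_⟩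
      have hrec := ht k
      rw [ih.2.1, ih.1] at hrec
      have e3 : ((k:ℤ) + 1 + 2) = (k:ℤ) + 3 := by ring
      rw [e3, hrec]
      have ez : (-2:ℝ) ^ ((k:ℤ) + 3) = (-2:ℝ)^(k:ℤ) * (-8) := by
        rw [zpow_add₀ hne]; norm_num
      have ez1 : (-2:ℝ) ^ ((k:ℤ) + 1) = (-2:ℝ)^(k:ℤ) * (-2) := by
        rw [zpow_add₀ hne]; norm_num
      rw [ez, ez1]; push_cast; ring
    | pred k ih =>
      have hrec := ht (-(k:ℤ) - 1)
      have e1 : (-(k:ℤ) - 1 + 3) = (-(k:ℤ) + 2) := by ring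
      have e2 : (-(k:ℤ) - 1 + 1) = (-(k:ℤ)) := by ring
      rw [e1, e2, ih.2.2, ih.1] at hrec
      have hm : t (-(k:ℤ) - 1) = A + B * ((-(k:ℤ)-1 : ℤ) : ℝ) + C * (-2:ℝ)^(-(k:ℤ)-1) := by
        have ezm : (-2:ℝ) ^ (-(k:ℤ) + 2) = (-2:ℝ)^(-(k:ℤ)-1) * (-8) := by
          rw [show (-(k:ℤ) + 2) = (-(k:ℤ) - 1) + 3 by ring, zpow_add₀ hne]; norm_num
        have ez0 : (-2:ℝ) ^ (-(k:ℤ)) = (-2:ℝ)^(-(k:ℤ)-1) * (-2) := by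
          rw [show (-(k:ℤ)) = (-(k:ℤ) - 1) + 1 by ring, zpow_add₀ hne]; norm_num
        rw [ezm, ez0] at hrec
        push_cast at hrec ⊢
        linarith
      refine ⟨hm, ?_, ?_⟩
      · rw [show (-(k:ℤ) - 1 + 1) = -(k:ℤ) by ring, ih.1]; push_cast; ring
      · rw [show (-(k:ℤ) - 1 + 2) = -(k:ℤ) + 1 by ring, ih.2.1]; push_cast; ring
  exact fun n => (key n).1

open Set

-- log-orbit recurrence
lemma aux_rec (J : Set ℝ) (hJ : J ⊆ Set.Ioi (0 : ℝ)) (f : ℝ → ℝ) (hf : Set.MapsTo f J J)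
    (heq : ∀ x ∈ J, f^[3] x = (f x) ^ 3 / x ^ 2) {x : ℝ} (hx : x ∈ J) :
    ∀ n : ℕ, Real.log (f^[n+3] x) = 3 * Real.log (f^[n+1] x) - 2 * Real.log (f^[n] x) := by
  intro n
  have horb : ∀ m : ℕ, f^[m] x ∈ J := fun m => (hf.iterate m) hx
  have hpos : ∀ m : ℕ, (0:ℝ) < f^[m] x := fun m => hJ (horb m)
  have h1 : f^[n+3] x = f^[3] (f^[n] x) := by
    rw [add_comm]; exact Function.iterate_add_apply f 3 n x
  have h2 : f (f^[n] x) = f^[n+1] x := (Function.iterate_succ_apply' f n x).symm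
  rw [h1, heq _ (horb n), h2]
  rw [Real.log_div (pow_ne_zero _ (hpos (n+1)).ne') (pow_ne_zero _ (hpos n).ne'),
    Real.log_pow, Real.log_pow]
  push_cast; ring

lemma aux_inc (J : Set ℝ) (hJ : J ⊆ Set.Ioi (0 : ℝ)) (hJI : J.OrdConnected)
    (hneJ : J.Nonempty)
    (f : ℝ → ℝ) (hf : Set.MapsTo f J J) (hfc : ContinuousOn f J)
    (heq : ∀ x ∈ J, f^[3] x = (f x) ^ 3 / x ^ 2) (hmono : StrictMonoOn f J) :
    ∃ c : ℝ, 0 < c ∧ ∀ x ∈ J, f x = c * x := by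
  have hpos : ∀ x ∈ J, (0:ℝ) < x := fun x hx => hJ hx
  have horb : ∀ x ∈ J, ∀ m : ℕ, f^[m] x ∈ J := fun x hx m => (hf.iterate m) hx
  have hitermono : ∀ n : ℕ, ∀ a ∈ J, ∀ b ∈ J, a ≤ b → f^[n] a ≤ f^[n] b := by
    intro n
    induction n with
    | zero => intro a _ b _ h; simpa using h
    | succ k ih =>
      intro a ha b hb h
      rw [Function.iterate_succ_apply' f k a, Function.iterate_succ_apply' f k b]
      exact hmono.monotoneOn (horb a ha k) (horb b hb k) (ih a ha b hb h)
  -- step 1 : f (f x) * x = f x * f x on J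
  have hkey : ∀ x ∈ J, f (f x) * x = f x * f x := by
    intro x hx
    set t : ℕ → ℝ := fun n => Real.log (f^[n] x) with htdef
    have ht : ∀ n, t (n+3) = 3 * t (n+1) - 2 * t n := aux_rec J hJ f hf heq hx
    set c0 : ℝ := t 2 - 2 * t 1 + t 0 with hc0def
    have hC : c0 = 0 := by
      by_contra hc0
      set A : ℝ := t 0 - c0/9 with hA
      set B : ℝ := t 1 - t 0 + c0/3 with hB
      set C : ℝ := c0/9 with hCC
      have hcf : ∀ n, t n = A + B * n + C * (-2:ℝ)^n := by
        apply aux_closed_form t ht A B C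
        · rw [hA, hCC]; ring
        · rw [hA, hB, hCC]; ring
        · rw [hA, hB, hCC, hc0def]; push_cast; ring
      have hCne : C ≠ 0 := by rw [hCC]; exact div_ne_zero hc0 (by norm_num)
      -- sign constancy of the difference
      have hdsign : (∀ n : ℕ, t n ≤ t (n+1)) ∨ (∀ n : ℕ, t (n+1) ≤ t n) := by
        rcases le_total x (f x) with h | h
        · left
          intro n
          apply Real.log_le_log (hpos _ (horb x hx n))
          rw [Function.iterate_succ_apply f n x]
          exact hitermono n x hx (f x) (hf hx) h
        · right
          intro n
          apply Real.log_le_log (hpos _ (horb x hx (n+1)))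
          rw [Function.iterate_succ_apply f n x]
          exact hitermono n (f x) (hf hx) x hx h
      -- choose m making opposite signs
      obtain ⟨m, hm⟩ := pow_unbounded_of_one_lt ((|B| + 1) / (3 * |C|))
        (by norm_num : (1:ℝ) < 4)
      have habs : 0 < |C| := abs_pos.mpr hCne
      have hm' : |B| + 1 < 3 * |C| * 4 ^ m := by
        rw [div_lt_iff₀ (by positivity)] at hm; linarith
      have h4pos : (0:ℝ) < 4 ^ m := by positivity
      have hd1 : t (2*m+1) - t (2*m) = B - 3 * C * 4 ^ m := by
        rw [hcf (2*m+1), hcf (2*m)]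
        have e1 : (-2:ℝ) ^ (2*m) = 4 ^ m := by
          rw [pow_mul]; norm_num
        have e2 : (-2:ℝ) ^ (2*m+1) = -2 * 4 ^ m := by
          rw [pow_succ, e1]; ring
        rw [e1, e2]; push_cast; ring
      have hd2 : t (2*m+2) - t (2*m+1) = B + 6 * C * 4 ^ m := by
        rw [hcf (2*m+2), hcf (2*m+1)]
        have e1 : (-2:ℝ) ^ (2*m) = 4 ^ m := by rw [pow_mul]; norm_num
        have e2 : (-2:ℝ) ^ (2*m+1) = -2 * 4 ^ m := by rw [pow_succ, e1]; ring
        have e3 : (-2:ℝ) ^ (2*m+2) = 4 * 4 ^ m := by rw [pow_succ, e2]; ring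
        rw [e2, e3]; push_cast; ring
      rcases hdsign with hd | hd
      · rcases lt_or_gt_of_ne hCne with hCneg | hCpos
        · -- C < 0 : d(2m+1) = B + 6C·4^m < 0
          have := hd (2*m+1)
          rw [show 2*m+1+1 = 2*m+2 from rfl] at this
          have habs' : |C| = -C := abs_of_neg hCneg
          nlinarith [le_abs_self B, neg_abs_le B]
        · -- C > 0 : d(2m) = B - 3C·4^m < 0
          have := hd (2*m)
          have habs' : |C| = C := abs_of_pos hCpos
          nlinarith [le_abs_self B, neg_abs_le B]
      · rcases lt_or_gt_of_ne hCne with hCneg | hCpos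
        · -- C < 0 : d(2m) = B - 3C·4^m > 0
          have := hd (2*m)
          have habs' : |C| = -C := abs_of_neg hCneg
          nlinarith [le_abs_self B, neg_abs_le B]
        · -- C > 0 : d(2m+1) > 0
          have := hd (2*m+1)
          rw [show 2*m+1+1 = 2*m+2 from rfl] at this
          have habs' : |C| = C := abs_of_pos hCpos
          nlinarith [le_abs_self B, neg_abs_le B]
    -- exponentiate
    have hsum : t 2 + t 0 = 2 * t 1 := by linarith [hC]
    have hx0 : (0:ℝ) < x := hpos x hx
    have hx1 : (0:ℝ) < f x := hpos _ (hf hx)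
    have hx2 : (0:ℝ) < f (f x) := hpos _ (hf (hf hx))
    have := congrArg Real.exp hsum
    rw [Real.exp_add, two_mul, Real.exp_add] at this
    have e0 : Real.exp (t 0) = x := by
      simp only [htdef, Function.iterate_zero_apply]; exact Real.exp_log hx0
    have e1 : Real.exp (t 1) = f x := by
      simp only [htdef, Function.iterate_one]; exact Real.exp_log hx1
    have e2 : Real.exp (t 2) = f (f x) := by
      simp only [htdef]
      rw [show f^[2] x = f (f x) from rfl]
      exact Real.exp_log hx2
    rw [e0, e1, e2] at this
    exact this
  -- step 2 : define g and show invariance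
  set g : ℝ → ℝ := fun y => f y / y with hgdef
  have hgpos : ∀ x ∈ J, 0 < g x := fun x hx => div_pos (hpos _ (hf hx)) (hpos x hx)
  have hgf : ∀ x ∈ J, g (f x) = g x := by
    intro x hx
    have hx0 := (hpos x hx).ne'
    have hx1 := (hpos _ (hf hx)).ne'
    have := hkey x hx
    simp only [hgdef]
    field_simp
    nlinarith [hkey x hx]
  have hgiter : ∀ x ∈ J, ∀ n : ℕ, f^[n] x = (g x)^n * x ∧ g (f^[n] x) = g x := by
    intro x hx n
    induction n with
    | zero => simp
    | succ k ih =>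
      constructor
      · rw [Function.iterate_succ_apply' f k x]
        have hcan : g (f^[k] x) * f^[k] x = f (f^[k] x) :=
          div_mul_cancel₀ _ (hpos _ (horb x hx k)).ne'
        rw [← hcan, ih.2, ih.1]; ring
      · rw [Function.iterate_succ_apply' f k x, hgf _ (horb x hx k), ih.2]
  -- step 3 : g is monotone on J
  have hgmono : ∀ a ∈ J, ∀ b ∈ J, a ≤ b → g a ≤ g b := by
    intro a ha b hb hab
    by_contra hcon
    push_neg at hcon
    have hr : 1 < g a / g b := (one_lt_div (hgpos b hb)).mpr hcon
    obtain ⟨n, hn⟩ := pow_unbounded_of_one_lt (b / a) hr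
    have hfa : f^[n] a = (g a)^n * a := (hgiter a ha n).1
    have hfb : f^[n] b = (g b)^n * b := (hgiter b hb n).1
    have hle := hitermono n a ha b hb hab
    rw [hfa, hfb] at hle
    have hga := hgpos a ha
    have hgb := hgpos b hb
    have hb0 := hpos b hb
    have ha0 := hpos a ha
    rw [div_pow] at hn
    rw [div_lt_div_iff₀ ha0 (by positivity)] at hn
    nlinarith [pow_pos hga n, pow_pos hgb n]
  -- step 4 : constancy
  have hgc : ContinuousOn g J := hfc.div continuousOn_id (fun x hx => (hpos x hx).ne')
  have hup : ∀ x ∈ J, 1 < g x → ∀ y ∈ J, x ≤ y → g y = g x := by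
    intro x hx hgx y hy hxy
    obtain ⟨n, hn⟩ := pow_unbounded_of_one_lt (y / x) hgx
    have hyx : y ≤ (g x)^n * x := by
      rw [div_lt_iff₀ (hpos x hx)] at hn; linarith
    have hfn : f^[n] x = (g x)^n * x := (hgiter x hx n).1
    have h1 : g x ≤ g y := hgmono x hx y hy hxy
    have h2 : g y ≤ g (f^[n] x) := by
      apply hgmono y hy _ (horb x hx n)
      rw [hfn]; exact hyx
    rw [(hgiter x hx n).2] at h2
    linarith
  have hdown : ∀ x ∈ J, g x < 1 → ∀ y ∈ J, y ≤ x → g y = g x := by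
    intro x hx hgx y hy hxy
    have hgxpos := hgpos x hx
    obtain ⟨n, hn⟩ : ∃ n : ℕ, (g x)^n < y / x := by
      rcases exists_pow_lt_of_lt_one (div_pos (hpos y hy) (hpos x hx)) hgx with ⟨n, hn⟩
      exact ⟨n, hn⟩
    have hyx : (g x)^n * x ≤ y := ((lt_div_iff₀ (hpos x hx)).mp hn).le
    have hfn : f^[n] x = (g x)^n * x := (hgiter x hx n).1
    have h1 : g y ≤ g x := hgmono y hy x hx hxy
    have h2 : g (f^[n] x) ≤ g y := by
      apply hgmono _ (horb x hx n) y hy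
      rw [hfn]; exact hyx
    rw [(hgiter x hx n).2] at h2
    linarith
  have hconst : ∀ u ∈ J, ∀ v ∈ J, g u = g v := by
    have key : ∀ u ∈ J, ∀ v ∈ J, u < v → g u = g v := by
      intro u hu v hv huv
      rcases eq_or_lt_of_le (hgmono u hu v hv huv.le) with h | h
      · exact h
      exfalso
      have hIcc : Icc u v ⊆ J := hJI.out hu hv
      have hgIcc : ContinuousOn g (Icc u v) := hgc.mono hIcc
      rcases le_or_gt (g v) 1 with hv1 | hv1
      · -- g u < g v ≤ 1 : pick μ ∈ (g u, g v), μ < 1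
        set μ := (g u + g v) / 2 with hμ
        have hμmem : μ ∈ Icc (g u) (g v) := by constructor <;> simp [hμ] <;> linarith
        obtain ⟨w, hw, hgw⟩ := intermediate_value_Icc huv.le hgIcc hμmem
        have hμ1 : g w < 1 := by rw [hgw]; simp [hμ]; linarith
        have := hdown w (hIcc hw) hμ1 u hu hw.1
        rw [hgw] at this
        simp [hμ] at this
        linarith
      · -- 1 < g v : pick μ ∈ (max (g u) 1, g v)
        set μ := (max (g u) 1 + g v) / 2 with hμ
        have hmax : max (g u) 1 < g v := by
          rcases max_cases (g u) 1 with ⟨h', _⟩ | ⟨h', _⟩ <;> rw [h'] <;> linarith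
        have hμmem : μ ∈ Icc (g u) (g v) := by
          constructor
          · have := le_max_left (g u) 1; simp only [hμ]; linarith
          · simp only [hμ]; linarith
        obtain ⟨w, hw, hgw⟩ := intermediate_value_Icc huv.le hgIcc hμmem
        have hμ1 : 1 < g w := by
          rw [hgw]; have := le_max_right (g u) 1; simp only [hμ]; linarith
        have := hup w (hIcc hw) hμ1 v hv hw.2
        rw [hgw] at this
        simp only [hμ] at this
        linarith
    intro u hu v hv
    rcases lt_trichotomy u v with h | h | h
    · exact key u hu v hv h
    · rw [h]
    · exact (key v hv u hu h).symm
  obtain ⟨x0, hx0⟩ := hneJ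
  refine ⟨g x0, hgpos x0 hx0, fun x hx => ?_⟩
  have : g x = g x0 := hconst x hx x0 hx0
  rw [← this]
  exact (div_mul_cancel₀ _ (hpos x hx).ne').symm

lemma aux_anti_c0 (J : Set ℝ) (hJ : J ⊆ Set.Ioi (0 : ℝ)) (f : ℝ → ℝ)
    (hf : Set.MapsTo f J J) (hne : ∃ a ∈ J, ∃ b ∈ J, a ≠ b)
    (hanti : StrictAntiOn f J) :
    ∃ x₀ ∈ J, f (f x₀) * x₀ ≠ f x₀ * f x₀ := by
  by_contra hcon
  push_neg at hcon
  obtain ⟨a', ha', b', hb', hab'⟩ := hne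
  have key : ∀ a ∈ J, ∀ b ∈ J, a < b → False := by
    intro a ha b hb hab
    have hfa : f a ∈ J := hf ha
    have hfb : f b ∈ J := hf hb
    have h1 : f b < f a := hanti ha hb hab
    have h2 : f (f a) < f (f b) := hanti hfb hfa h1
    have ha0 : 0 < a := hJ ha
    have hb0 : 0 < b := hJ hb
    have hfb0 : 0 < f b := hJ hfb
    have hffa0 : 0 < f (f a) := hJ (hf hfa)
    have e1 := hcon a ha
    have e2 := hcon b hb
    nlinarith
  rcases lt_trichotomy a' b' with h | h | h
  · exact key a' ha' b' hb' h
  · exact hab' h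
  · exact key b' hb' a' ha' h

lemma aux_blowup (J : Set ℝ) (hJ : J ⊆ Set.Ioi (0 : ℝ)) (f : ℝ → ℝ)
    (hf : Set.MapsTo f J J)
    (heq : ∀ x ∈ J, f^[3] x = (f x) ^ 3 / x ^ 2) {x₀ : ℝ} (hx₀ : x₀ ∈ J)
    (hc0 : f (f x₀) * x₀ ≠ f x₀ * f x₀) :
    (∀ M : ℝ, ∃ n : ℕ, M < f^[n] x₀) ∧ (∀ ε : ℝ, 0 < ε → ∃ n : ℕ, f^[n] x₀ < ε) := by
  have hpos : ∀ m : ℕ, (0:ℝ) < f^[m] x₀ := fun m => hJ ((hf.iterate m) hx₀)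
  set t : ℕ → ℝ := fun n => Real.log (f^[n] x₀) with htdef
  have ht : ∀ n, t (n+3) = 3 * t (n+1) - 2 * t n := aux_rec J hJ f hf heq hx₀
  set c0 : ℝ := t 2 - 2 * t 1 + t 0 with hc0def
  have hc0ne : c0 ≠ 0 := by
    intro hzero
    apply hc0
    have hsum : t 2 + t 0 = 2 * t 1 := by linarith
    have := congrArg Real.exp hsum
    rw [Real.exp_add, two_mul, Real.exp_add] at this
    have e0 : Real.exp (t 0) = x₀ := by
      simp only [htdef, Function.iterate_zero_apply]; exact Real.exp_log (hJ hx₀)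
    have e1 : Real.exp (t 1) = f x₀ := by
      simp only [htdef, Function.iterate_one]; exact Real.exp_log (hpos 1)
    have e2 : Real.exp (t 2) = f (f x₀) := by
      simp only [htdef]
      rw [show f^[2] x₀ = f (f x₀) from rfl]
      exact Real.exp_log (by rw [show f (f x₀) = f^[2] x₀ from rfl]; exact hpos 2)
    rw [e0, e1, e2] at this
    exact this
  set A : ℝ := t 0 - c0/9 with hA
  set B : ℝ := t 1 - t 0 + c0/3 with hB
  set C : ℝ := c0/9 with hCC
  have hcf : ∀ n, t n = A + B * n + C * (-2:ℝ)^n := by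
    apply aux_closed_form t ht A B C
    · rw [hA, hCC]; ring
    · rw [hA, hB, hCC]; ring
    · rw [hA, hB, hCC, hc0def]; push_cast; ring
  have hCne : C ≠ 0 := div_ne_zero hc0ne (by norm_num)
  have heven : ∀ m : ℕ, t (2*m) = A + B * (2*(m:ℝ)) + C * 4 ^ m := by
    intro m
    rw [hcf (2*m)]
    have e1 : (-2:ℝ) ^ (2*m) = 4 ^ m := by rw [pow_mul]; norm_num
    rw [e1]; push_cast; ring
  have hodd : ∀ m : ℕ, t (2*m+1) = A + B * (2*(m:ℝ)+1) + (-2*C) * 4 ^ m := by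
    intro m
    rw [hcf (2*m+1)]
    have e1 : (-2:ℝ) ^ (2*m) = 4 ^ m := by rw [pow_mul]; norm_num
    have e2 : (-2:ℝ) ^ (2*m+1) = -2 * 4 ^ m := by rw [pow_succ, e1]; ring
    rw [e2]; push_cast; ring
  have hup : ∀ M : ℝ, ∃ n : ℕ, M < t n := by
    intro M
    rcases lt_or_gt_of_ne hCne with hC | hC
    · obtain ⟨m, hm⟩ := aux_pow_big (2*B) (-2*C) (M - A - B) (by linarith)
      exact ⟨2*m+1, by rw [hodd m]; push_cast; push_cast at hm; linarith⟩
    · obtain ⟨m, hm⟩ := aux_pow_big (2*B) C (M - A) hC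
      exact ⟨2*m, by rw [heven m]; push_cast; push_cast at hm; linarith⟩
  have hdown : ∀ M : ℝ, ∃ n : ℕ, t n < M := by
    intro M
    rcases lt_or_gt_of_ne hCne with hC | hC
    · obtain ⟨m, hm⟩ := aux_pow_big (-(2*B)) (-C) (A + B * 0 - M) (by linarith)
      refine ⟨2*m, ?_⟩
      rw [heven m]
      push_cast at hm ⊢
      nlinarith
    · obtain ⟨m, hm⟩ := aux_pow_big (-(2*B)) (2*C) (A + B - M) (by linarith)
      refine ⟨2*m+1, ?_⟩
      rw [hodd m]
      push_cast at hm ⊢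
      nlinarith
  constructor
  · intro M
    obtain ⟨n, hn⟩ := hup (Real.log (max M 1))
    refine ⟨n, lt_of_le_of_lt (le_max_left M 1) ?_⟩
    have := Real.exp_lt_exp.mpr hn
    rwa [Real.exp_log (by positivity : (0:ℝ) < max M 1), Real.exp_log (hpos n)] at this
  · intro ε hε
    obtain ⟨n, hn⟩ := hdown (Real.log ε)
    refine ⟨n, ?_⟩
    have := Real.exp_lt_exp.mpr hn
    rwa [Real.exp_log hε, Real.exp_log (hpos n)] at this

lemma aux_lin_nonpos (B K : ℝ) (h : ∀ n : ℤ, n ≤ 0 → K ≤ B * n) : B ≤ 0 := by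
  by_contra hB
  push_neg at hB
  obtain ⟨n, hn⟩ := exists_int_lt (min (K / B) 0)
  have hn0 : n ≤ 0 := by
    have : (n:ℝ) < 0 := lt_of_lt_of_le hn (min_le_right _ _)
    exact_mod_cast this.le
  have h1 : (n:ℝ) < K / B := lt_of_lt_of_le hn (min_le_left _ _)
  have h2 : B * n < K := by
    rw [lt_div_iff₀ hB] at h1
    linarith
  linarith [h n hn0]

lemma aux_lin_nonneg (B K : ℝ) (h : ∀ n : ℤ, n ≤ 0 → B * n ≤ K) : 0 ≤ B := by
  have := aux_lin_nonpos (-B) (-K) (fun n hn => by have := h n hn; push_cast; linarith)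
  linarith

lemma aux_Bzero (A B C L : ℝ)
    (h1 : ∀ n : ℤ, n ≤ 0 → L ≤ A + B * (2*n) + C * (4:ℝ)^n)
    (h2 : ∀ n : ℤ, n ≤ 0 → A + B * (2*n+1) + (-2*C) * (4:ℝ)^n ≤ L) : B = 0 := by
  have h4le : ∀ n : ℤ, n ≤ 0 → (4:ℝ)^n ≤ 1 := fun n hn =>
    zpow_le_one_of_nonpos₀ (by norm_num) hn
  have h4pos : ∀ n : ℤ, (0:ℝ) < (4:ℝ)^n := fun n => zpow_pos (by norm_num) n
  have hble : B ≤ 0 := by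
    have h2B := aux_lin_nonpos (2*B) (L - A - |C|) ?_
    · linarith

    intro n hn
    have hCb : C * (4:ℝ)^n ≤ |C| := by
      calc C * 4^n ≤ |C| * 4^n := mul_le_mul_of_nonneg_right (le_abs_self C) (h4pos n).le
      _ ≤ |C| * 1 := mul_le_mul_of_nonneg_left (h4le n hn) (abs_nonneg C)
      _ = |C| := mul_one _
    have := h1 n hn
    push_cast at this ⊢
    linarith
  have hbge : 0 ≤ B := by
    have h2B := aux_lin_nonneg (2*B) (L - A - B + 2*|C|) ?_
    · linarith

    intro n hn
    have hCb : -(2*|C|) ≤ (-2*C) * (4:ℝ)^n := by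
      rcases le_or_gt 0 (-2*C) with h | h
      · have := mul_nonneg h (h4pos n).le
        have := abs_nonneg C
        linarith
      · calc (-2*C) * 4^n ≥ (-2*C) * 1 := by
              apply mul_le_mul_of_nonpos_left (h4le n hn) h.le
        _ ≥ -(2*|C|) := by
              have := le_abs_self C; linarith
    have := h2 n hn
    push_cast at this ⊢
    linarith
  linarith

set_option maxHeartbeats 1600000 in
lemma aux_anti_full (f : ℝ → ℝ) (hf : Set.MapsTo f (Set.Ioi 0) (Set.Ioi 0))
    (hfc : ContinuousOn f (Set.Ioi 0))
    (heq : ∀ x ∈ Set.Ioi (0:ℝ), f^[3] x = (f x) ^ 3 / x ^ 2)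
    (hanti : StrictAntiOn f (Set.Ioi 0)) :
    ∃ c : ℝ, 0 < c ∧ ∀ x ∈ Set.Ioi (0:ℝ), f x = c / x ^ 2 := by
  have hposf : ∀ {x : ℝ}, 0 < x → 0 < f x := fun {x} hx => hf hx
  have hantile : ∀ x y : ℝ, 0 < x → x ≤ y → f y ≤ f x := by
    intro x y hx hxy
    rcases eq_or_lt_of_le hxy with h | h
    · rw [h]
    · exact (hanti hx (lt_trans hx h) h).le
  have hf1 : 0 < f 1 := hposf one_pos
  -- surjectivity
  have hsurj : ∀ y : ℝ, 0 < y → ∃ x : ℝ, 0 < x ∧ f x = y := by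
    intro y hy
    have hzlo : ∃ z : ℝ, 0 < z ∧ f z < y := by
      set x := max 1 (Real.sqrt ((f 1)^3 / y) + 1) with hxdef
      have hx1 : 1 ≤ x := le_max_left _ _
      have hx0 : 0 < x := lt_of_lt_of_le one_pos hx1
      have hsq : (f 1)^3 / y < x^2 := by
        have h1 : Real.sqrt ((f 1)^3 / y) + 1 ≤ x := le_max_right _ _
        have h2 : (0:ℝ) ≤ (f 1)^3 / y := by positivity
        have h3 : Real.sqrt ((f 1)^3/y) ^ 2 = (f 1)^3 / y := Real.sq_sqrt h2
        nlinarith [Real.sqrt_nonneg ((f 1)^3/y)]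
      have hfx : f x ≤ f 1 := hantile 1 x one_pos hx1
      have hfx0 : 0 < f x := hposf hx0
      have h3 : f^[3] x < y := by
        rw [heq x hx0]
        rw [div_lt_iff₀ (by positivity)]
        have hcube : (f x)^3 ≤ (f 1)^3 := pow_le_pow_left₀ hfx0.le hfx 3
        rw [div_lt_iff₀ hy] at hsq
        nlinarith
      refine ⟨f^[2] x, ?_, ?_⟩
      · exact hf (hf hx0)
      · have : f^[3] x = f (f^[2] x) := Function.iterate_succ_apply' f 2 x
        rw [← this]; exact h3
    have hzhi : ∃ z : ℝ, 0 < z ∧ y < f z := by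
      set x := min 1 (Real.sqrt ((f 1)^3 / y) / 2) with hxdef
      have hsqpos : 0 < Real.sqrt ((f 1)^3 / y) := Real.sqrt_pos.mpr (by positivity)
      have hx0 : 0 < x := lt_min one_pos (by positivity)
      have hx1 : x ≤ 1 := min_le_left _ _
      have hsq : x^2 < (f 1)^3 / y := by
        have h1 : x ≤ Real.sqrt ((f 1)^3 / y) / 2 := min_le_right _ _
        have h3 : Real.sqrt ((f 1)^3/y) ^ 2 = (f 1)^3 / y := Real.sq_sqrt (by positivity)
        nlinarith
      have hfx : f 1 ≤ f x := hantile x 1 hx0 hx1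
      have h3 : y < f^[3] x := by
        rw [heq x hx0]
        rw [lt_div_iff₀ (by positivity)]
        have hcube : (f 1)^3 ≤ (f x)^3 := pow_le_pow_left₀ hf1.le hfx 3
        rw [lt_div_iff₀ hy] at hsq
        nlinarith
      refine ⟨f^[2] x, hf (hf hx0), ?_⟩
      have : f^[3] x = f (f^[2] x) := Function.iterate_succ_apply' f 2 x
      rw [← this]; exact h3
    obtain ⟨zl, hzl0, hzl⟩ := hzlo
    obtain ⟨zh, hzh0, hzh⟩ := hzhi
    have hlt : zh < zl := by
      by_contra hcon
      push_neg at hcon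
      have := hantile zl zh hzl0 hcon
      linarith
    have hIcc : Icc zh zl ⊆ Ioi (0:ℝ) := fun w hw => lt_of_lt_of_le hzh0 hw.1
    have := intermediate_value_Icc' hlt.le (hfc.mono hIcc)
    have hymem : y ∈ Icc (f zl) (f zh) := ⟨hzl.le, hzh.le⟩
    obtain ⟨w, hw, hfw⟩ := this hymem
    exact ⟨w, hIcc hw, hfw⟩
  -- fixed point
  obtain ⟨p, hp0, hpf⟩ : ∃ p : ℝ, 0 < p ∧ f p = p := by
    set x1 := max 1 (f 1) + 1 with hx1def
    set x0 := min 1 (f 1) / 2 with hx0def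
    have hx00 : 0 < x0 := by
      have := lt_min one_pos hf1; positivity
    have hx01 : x0 < 1 := by
      have := min_le_left 1 (f 1); rw [hx0def]; linarith
    have hx11 : 1 < x1 := by
      have := le_max_left 1 (f 1); rw [hx1def]; linarith
    have hφ0 : x0 < f x0 := by
      have h1 : f 1 < f x0 := hanti hx00 (Set.mem_Ioi.mpr one_pos) hx01
      have h2 : x0 ≤ f 1 / 2 := by
        have := min_le_right 1 (f 1); rw [hx0def]; linarith
      linarith
    have hφ1 : f x1 < x1 := by
      have h1 : f x1 < f 1 := hanti (Set.mem_Ioi.mpr one_pos) (Set.mem_Ioi.mpr (lt_trans one_pos hx11)) hx11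
      have h2 : f 1 ≤ max 1 (f 1) := le_max_right _ _
      rw [hx1def]; linarith
    have hx01' : x0 < x1 := lt_trans hx01 hx11
    have hIcc : Icc x0 x1 ⊆ Ioi (0:ℝ) := fun w hw => lt_of_lt_of_le hx00 hw.1
    have hφc : ContinuousOn (fun w => f w - w) (Icc x0 x1) :=
      (hfc.mono hIcc).sub continuousOn_id
    have h0mem : (0:ℝ) ∈ Icc (f x1 - x1) (f x0 - x0) := ⟨by linarith, by linarith⟩
    obtain ⟨q, hq, hfq⟩ := intermediate_value_Icc' hx01'.le hφc h0mem
    exact ⟨q, lt_of_lt_of_le hx00 hq.1, by linarith [hfq, sub_eq_zero.mp hfq]⟩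
  have hpuniq : ∀ q : ℝ, 0 < q → f q = q → q = p := by
    intro q hq hfq
    rcases lt_trichotomy q p with h | h | h
    · have := hanti hq hp0 h; rw [hfq, hpf] at this; linarith
    · exact h
    · have := hanti hp0 hq h; rw [hfq, hpf] at this; linarith
  have hp2 : ∀ q : ℝ, 0 < q → f (f q) = q → q = p := by
    intro q hq h2
    have hfq0 : 0 < f q := hposf hq
    have h3 : f^[3] q = f q := by
      have : f^[3] q = f (f (f q)) := by
        rw [show (3:ℕ) = 2 + 1 from rfl, Function.iterate_add_apply]
        simp [Function.iterate_succ_apply']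
      rw [this, h2]
    have h4 := heq q hq
    rw [h3] at h4
    have h5 : f q * q^2 = (f q)^3 := by
      field_simp at h4
      rw [h4]; ring
    have h6 : q^2 = (f q)^2 := by
      have := hfq0.ne'
      nlinarith
    have h7 : q = f q := by nlinarith
    exact hpuniq q hq (h7.symm)
  -- inverse function
  have hchoice : ∀ y : ℝ, ∃ x : ℝ, 0 < y → (0 < x ∧ f x = y) := by
    intro y
    by_cases hy : 0 < y
    · obtain ⟨x, hx⟩ := hsurj y hy
      exact ⟨x, fun _ => hx⟩
    · exact ⟨1, fun h => absurd h hy⟩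
  choose finv hfinv using hchoice
  -- the key pointwise formula
  have main : ∀ x : ℝ, 0 < x → f x = p^3 / x^2 := by
    intro x hx0
    rcases eq_or_ne x p with rfl | hxp
    · rw [hpf]
      field_simp
    -- ℤ-indexed orbit
    have hforb : ∀ k : ℕ, 0 < f^[k] x := fun k => (hf.iterate k) hx0
    have hinvit : ∀ k : ℕ, 0 < finv^[k] x := by
      intro k
      induction k with
      | zero => simpa using hx0
      | succ m ih =>
        rw [Function.iterate_succ_apply' finv m x]
        exact (hfinv _ ih).1
    set o : ℤ → ℝ := fun n => if 0 ≤ n then f^[n.toNat] x else finv^[(-n).toNat] x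
      with hodef
    have ho_pos : ∀ n : ℤ, 0 < o n := by
      intro n
      simp only [hodef]
      by_cases hn : 0 ≤ n
      · rw [if_pos hn]; exact hforb _
      · rw [if_neg hn]; exact hinvit _
    have ho_step : ∀ n : ℤ, f (o n) = o (n + 1) := by
      intro n
      rcases le_or_gt 0 n with hn | hn
      · have h1 : (n+1).toNat = n.toNat + 1 := by omega
        simp only [hodef, if_pos hn, if_pos (by omega : (0:ℤ) ≤ n+1), h1]
        rw [Function.iterate_succ_apply' f n.toNat x]
      · by_cases hn1 : n = -1
        · subst hn1
          simp only [hodef, if_neg (by norm_num : ¬ (0:ℤ) ≤ -1),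
            if_pos (by norm_num : (0:ℤ) ≤ -1 + 1)]
          norm_num
          exact (hfinv x hx0).2
        · have hn2 : ¬ (0:ℤ) ≤ n + 1 := by omega
          have e1 : (-n).toNat = (-(n+1)).toNat + 1 := by omega
          simp only [hodef, if_neg (not_le.mpr hn), if_neg hn2, e1]
          rw [Function.iterate_succ_apply' finv]
          exact (hfinv _ (hinvit _)).2
    have ho0 : o 0 = x := by simp [hodef]
    have ho3 : ∀ n : ℤ, o (n+3) = f (f (f (o n))) := by
      intro n
      rw [show n + 3 = n + 1 + 1 + 1 by ring, ← ho_step, ← ho_step, ← ho_step]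
    set T : ℤ → ℝ := fun n => Real.log (o n) with hTdef
    have hoexp : ∀ n : ℤ, o n = Real.exp (T n) := fun n => (Real.exp_log (ho_pos n)).symm
    have hT : ∀ n : ℤ, T (n+3) = 3 * T (n+1) - 2 * T n := by
      intro n
      have h1 := heq (o n) (ho_pos n)
      have h2 : f^[3] (o n) = f (f (f (o n))) := by
        rw [show (3:ℕ) = 2 + 1 from rfl, Function.iterate_add_apply]
        simp [Function.iterate_succ_apply']
      rw [h2] at h1
      have h3 : o (n + 3) = f (o n) ^ 3 / (o n) ^ 2 := by rw [ho3 n, h1]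
      have h4 : f (o n) = o (n+1) := ho_step n
      rw [h4] at h3
      simp only [hTdef]
      rw [h3, Real.log_div (pow_ne_zero _ (ho_pos (n+1)).ne') (pow_ne_zero _ (ho_pos n).ne'),
        Real.log_pow, Real.log_pow]
      push_cast
      ring
    set c0 : ℝ := T 2 - 2 * T 1 + T 0 with hc0def
    set A : ℝ := T 0 - c0/9 with hA
    set B : ℝ := T 1 - T 0 + c0/3 with hB
    set C : ℝ := c0/9 with hCC
    have hcf : ∀ n : ℤ, T n = A + B * n + C * (-2:ℝ)^n := by
      apply aux_closed_form_int T hT A B C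
      · rw [hA, hCC]; ring
      · rw [hA, hB, hCC]; ring
      · rw [hA, hB, hCC, hc0def]; push_cast; ring
    -- sign pattern
    have hfflip1 : ∀ y : ℝ, 0 < y → y < p → p < f y := by
      intro y hy hyp
      have := hanti (Set.mem_Ioi.mpr hy) (Set.mem_Ioi.mpr hp0) hyp
      rwa [hpf] at this
    have hfflip2 : ∀ y : ℝ, p < y → f y < p := by
      intro y hyp
      have := hanti (Set.mem_Ioi.mpr hp0) (Set.mem_Ioi.mpr (lt_trans hp0 hyp)) hyp
      rwa [hpf] at this
    have hsign : ∀ n : ℤ, (Even n → (x - p) * (o n - p) > 0) ∧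
        (¬ Even n → (x - p) * (o n - p) < 0) := by
      have hbase : (x - p) * (o 0 - p) > 0 := by
        rw [ho0]
        rcases lt_or_gt_of_ne hxp with h | h
        · nlinarith
        · nlinarith
      have fwd : ∀ n : ℤ, (x - p) * (o n - p) ≠ 0 →
          ((x - p) * (o n - p) > 0 → (x - p) * (o (n+1) - p) < 0) ∧
          ((x - p) * (o n - p) < 0 → (x - p) * (o (n+1) - p) > 0) := by
        intro n _
        constructor
        · intro h
          rw [← ho_step n]
          rcases lt_or_gt_of_ne hxp with hxl | hxg
          · -- x < p so o n < p
            have hon : o n < p := by nlinarith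
            have := hfflip1 (o n) (ho_pos n) hon
            nlinarith
          · have hon : p < o n := by nlinarith
            have := hfflip2 (o n) hon
            nlinarith
        · intro h
          rw [← ho_step n]
          rcases lt_or_gt_of_ne hxp with hxl | hxg
          · have hon : p < o n := by nlinarith
            have := hfflip2 (o n) hon
            nlinarith
          · have hon : o n < p := by nlinarith
            have := hfflip1 (o n) (ho_pos n) hon
            nlinarith
      have bwd : ∀ n : ℤ,
          ((x - p) * (o (n+1) - p) < 0 → (x - p) * (o n - p) > 0) ∧
          ((x - p) * (o (n+1) - p) > 0 → (x - p) * (o n - p) < 0) := by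
        intro n
        have hstep := ho_step n
        constructor
        · intro h
          rw [← hstep] at h
          rcases lt_trichotomy (o n) p with h1 | h1 | h1
          · have := hfflip1 (o n) (ho_pos n) h1
            rcases lt_or_gt_of_ne hxp with hxl | hxg
            · nlinarith
            · nlinarith
          · rw [h1, hpf] at h; nlinarith
          · have := hfflip2 (o n) h1
            rcases lt_or_gt_of_ne hxp with hxl | hxg
            · nlinarith
            · nlinarith
        · intro h
          rw [← hstep] at h
          rcases lt_trichotomy (o n) p with h1 | h1 | h1
          · have := hfflip1 (o n) (ho_pos n) h1
            rcases lt_or_gt_of_ne hxp with hxl | hxg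
            · nlinarith
            · nlinarith
          · rw [h1, hpf] at h; nlinarith
          · have := hfflip2 (o n) h1
            rcases lt_or_gt_of_ne hxp with hxl | hxg
            · nlinarith
            · nlinarith
      have key : ∀ n : ℤ, (Even n ∧ (x - p) * (o n - p) > 0) ∨
          (¬ Even n ∧ (x - p) * (o n - p) < 0) := by
        intro n
        induction n using Int.induction_on with
        | zero => exact Or.inl ⟨Even.zero, hbase⟩
        | succ k ih =>
          rcases ih with ⟨he, hv⟩ | ⟨he, hv⟩
          · right
            refine ⟨by rw [Int.even_add_one]; simpa using he, ?_⟩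
            exact ((fwd k (ne_of_gt hv)).1) hv
          · left
            refine ⟨by rw [Int.even_add_one]; simpa using he, ?_⟩
            exact ((fwd k (ne_of_lt hv)).2) hv
        | pred k ih =>
          have hco : (-(k:ℤ) - 1) + 1 = -(k:ℤ) := by ring
          have hb := bwd (-(k:ℤ) - 1)
          rw [hco] at hb
          rcases ih with ⟨he, hv⟩ | ⟨he, hv⟩
          · right
            refine ⟨?_, hb.2 hv⟩
            intro hcon
            rw [show -(k:ℤ) = (-(k:ℤ)-1)+1 by ring, Int.even_add_one] at he
            exact he hcon
          · left
            refine ⟨?_, hb.1 hv⟩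
            rw [show -(k:ℤ) = (-(k:ℤ)-1)+1 by ring, Int.even_add_one] at he
            exact not_not.mp he
      intro n
      rcases key n with ⟨he, hv⟩ | ⟨he, hv⟩
      · exact ⟨fun _ => hv, fun hne => absurd he hne⟩
      · exact ⟨fun hev => absurd hev he, fun _ => hv⟩
    -- closed form at even and odd integers
    have hTe : ∀ n : ℤ, T (2*n) = A + B * (2*(n:ℝ)) + C * (4:ℝ)^n := by
      intro n
      rw [hcf (2*n), zpow_mul]
      norm_num
    have hTo : ∀ n : ℤ, T (2*n+1) = A + B * (2*(n:ℝ)+1) + (-2*C) * (4:ℝ)^n := by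
      intro n
      rw [hcf (2*n+1), zpow_add_one₀ (by norm_num : (-2:ℝ) ≠ 0), zpow_mul]
      norm_num
      ring
    have heven2 : ∀ n : ℤ, Even (2*n) := fun n => even_two_mul n
    have hodd2 : ∀ n : ℤ, ¬ Even (2*n+1) := by
      intro n
      rw [Int.even_add_one]
      simpa using heven2 n
    have hBzero : B = 0 := by
      rcases lt_or_gt_of_ne hxp with hxl | hxg
      · -- x < p : even orbit below p, odd orbit above p
        have h1 : ∀ n : ℤ, n ≤ 0 → -(Real.log p) ≤ -A + (-B) * (2*(n:ℝ)) + (-C) * (4:ℝ)^n := by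
          intro n _
          have hv := (hsign (2*n)).1 (heven2 n)
          have hop : o (2*n) < p := by nlinarith
          have hlog := Real.log_lt_log (ho_pos (2*n)) hop
          have hTeq : Real.log (o (2*n)) = T (2*n) := rfl
          rw [hTeq, hTe n] at hlog
          linarith
        have h2 : ∀ n : ℤ, n ≤ 0 → -A + (-B) * (2*(n:ℝ)+1) + (-2*(-C)) * (4:ℝ)^n ≤ -(Real.log p) := by
          intro n _
          have hv := (hsign (2*n+1)).2 (hodd2 n)
          have hop : p < o (2*n+1) := by nlinarith
          have hlog := Real.log_lt_log hp0 hop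
          have hTeq : Real.log (o (2*n+1)) = T (2*n+1) := rfl
          rw [hTeq, hTo n] at hlog
          linarith
        have := aux_Bzero (-A) (-B) (-C) (-(Real.log p)) h1 h2
        linarith
      · -- x > p
        have h1 : ∀ n : ℤ, n ≤ 0 → Real.log p ≤ A + B * (2*(n:ℝ)) + C * (4:ℝ)^n := by
          intro n _
          have hv := (hsign (2*n)).1 (heven2 n)
          have hop : p < o (2*n) := by nlinarith
          have hlog := Real.log_lt_log hp0 hop
          have hTeq : Real.log (o (2*n)) = T (2*n) := rfl
          rw [hTeq, hTe n] at hlog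
          linarith
        have h2 : ∀ n : ℤ, n ≤ 0 → A + B * (2*(n:ℝ)+1) + (-2*C) * (4:ℝ)^n ≤ Real.log p := by
          intro n _
          have hv := (hsign (2*n+1)).2 (hodd2 n)
          have hop : o (2*n+1) < p := by nlinarith
          have hlog := Real.log_lt_log (ho_pos (2*n+1)) hop
          have hTeq : Real.log (o (2*n+1)) = T (2*n+1) := rfl
          rw [hTeq, hTo n] at hlog
          linarith
        exact aux_Bzero A B C (Real.log p) h1 h2
    -- limit argument : exp A is a fixed point of f
    have hTn : ∀ n : ℤ, T n = A + C * (-2:ℝ)^n := by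
      intro n; rw [hcf n, hBzero]; ring
    set q := Real.exp A with hqdef
    have hq0 : 0 < q := Real.exp_pos A
    have hu : ∀ m : ℕ, o (2*(-(m:ℤ))) = Real.exp (A + C * (4:ℝ)^(-(m:ℤ))) := by
      intro m
      rw [hoexp, hTn]
      congr 2
      rw [zpow_mul]
      norm_num
    have hv : ∀ m : ℕ, f (o (2*(-(m:ℤ)))) = Real.exp (A + (-2*C) * (4:ℝ)^(-(m:ℤ))) := by
      intro m
      rw [ho_step (2*(-(m:ℤ))), hoexp, hTn,
        zpow_add_one₀ (by norm_num : (-2:ℝ) ≠ 0), zpow_mul]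
      norm_num
      ring_nf
    have hlim4 : Filter.Tendsto (fun m : ℕ => (4:ℝ)^(-(m:ℤ))) Filter.atTop (nhds 0) := by
      have he4 : ∀ m : ℕ, (4:ℝ)^(-(m:ℤ)) = (1/4:ℝ)^m := by
        intro m; rw [zpow_neg, zpow_natCast]; simp [one_div, inv_pow]
      simp only [he4]
      exact tendsto_pow_atTop_nhds_zero_of_lt_one (by norm_num) (by norm_num)
    have hlimu : Filter.Tendsto (fun m : ℕ => o (2*(-(m:ℤ)))) Filter.atTop (nhds q) := by
      simp only [hu]
      have h1 : Filter.Tendsto (fun m : ℕ => A + C * (4:ℝ)^(-(m:ℤ))) Filter.atTop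
          (nhds (A + C * 0)) := tendsto_const_nhds.add (hlim4.const_mul C)
      have := (Real.continuous_exp.continuousAt (x := A + C * 0)).tendsto.comp h1
      simpa [hqdef, Function.comp_def] using this
    have hlimv : Filter.Tendsto (fun m : ℕ => f (o (2*(-(m:ℤ))))) Filter.atTop (nhds q) := by
      simp only [hv]
      have h1 : Filter.Tendsto (fun m : ℕ => A + (-2*C) * (4:ℝ)^(-(m:ℤ))) Filter.atTop
          (nhds (A + (-2*C) * 0)) := tendsto_const_nhds.add (hlim4.const_mul (-2*C))
      have := (Real.continuous_exp.continuousAt (x := A + (-2*C) * 0)).tendsto.comp h1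
      simpa [hqdef, Function.comp_def] using this
    have hfq : f q = q := by
      have hcq : ContinuousAt f q := hfc.continuousAt (Ioi_mem_nhds hq0)
      have := hcq.tendsto.comp hlimu
      exact tendsto_nhds_unique this hlimv
    have hqp : q = p := hpuniq q hq0 hfq
    have hAlog : A = Real.log p := by
      rw [← hqp, hqdef, Real.log_exp]
    -- final computation
    have hx_eq : x = Real.exp (A + C) := by
      have := hoexp 0
      rw [ho0, hTn 0] at this
      simpa using this
    have hfx_eq : f x = Real.exp (A - 2*C) := by
      have h1 : f (o 0) = o 1 := ho_step 0
      rw [ho0] at h1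
      rw [h1, hoexp 1, hTn 1, zpow_one]
      ring_nf
    have hp_eq : p = Real.exp A := by rw [hAlog]; exact (Real.exp_log hp0).symm
    rw [hfx_eq, hx_eq, hp_eq, eq_div_iff (by positivity)]
    rw [show (Real.exp (A + C))^2 = Real.exp ((2:ℕ) * (A + C)) from
      by rw [Real.exp_nat_mul], show (Real.exp A)^3 = Real.exp ((3:ℕ) * A) from
      by rw [Real.exp_nat_mul], ← Real.exp_add]
    apply congrArg
    push_cast
    ring
  exact ⟨p^3, by positivity, fun x hx => main x hx⟩


/-- Solution of the original Boros problem: continuous solutions `f : J → J` of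
`f³(x) = f(x)³ / x²` on a nondegenerate interval `J ⊆ (0, ∞)`. -/
theorem boros_problem_cubic
    (J : Set ℝ) (hJ : J ⊆ Set.Ioi (0 : ℝ)) (hJI : J.OrdConnected)
    (hne : ∃ a ∈ J, ∃ b ∈ J, a ≠ b)
    (f : ℝ → ℝ) (hf : Set.MapsTo f J J) (hfc : ContinuousOn f J)
    (heq : ∀ x ∈ J, f^[3] x = (f x) ^ 3 / x ^ 2) :
    (Bornology.IsBounded J → (0 : ℝ) ∉ closure J → ∀ x ∈ J, f x = x) ∧
    (Bornology.IsBounded J → (0 : ℝ) ∈ closure J →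
      ∃ c ∈ Set.Ioc (0 : ℝ) 1, ∀ x ∈ J, f x = c * x) ∧
    (¬ Bornology.IsBounded J → (0 : ℝ) ∉ closure J →
      ∃ c ∈ Set.Ici (1 : ℝ), ∀ x ∈ J, f x = c * x) ∧
    (J = Set.Ioi (0 : ℝ) →
      ∃ c ∈ Set.Ioi (0 : ℝ), (∀ x ∈ J, f x = c * x) ∨ (∀ x ∈ J, f x = c / x ^ 2)) := by
  obtain ⟨a0, ha0, b0, hb0, hab0⟩ := hne
  have hpos : ∀ x ∈ J, (0:ℝ) < x := fun x hx => hJ hx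
  have hit3 : ∀ z : ℝ, f^[3] z = f (f (f z)) := by
    intro z
    rw [show (3:ℕ) = 2+1 from rfl, Function.iterate_add_apply]
    simp [Function.iterate_succ_apply']
  have hinj : Set.InjOn f J := by
    intro a ha b hb hfab
    have ha0' : 0 < a := hJ ha
    have hb0' : 0 < b := hJ hb
    have hfb : 0 < f b := hJ (hf hb)
    have h3a := heq a ha
    have h3b := heq b hb
    rw [hit3, hfab] at h3a
    rw [hit3] at h3b
    have heq2 : (f b)^3 / a^2 = (f b)^3 / b^2 := by rw [← h3a, h3b]
    have hsq : a^2 = b^2 := by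
      have h1 : (f b)^3 ≠ 0 := by positivity
      field_simp at heq2
      nlinarith [heq2]
    rcases lt_trichotomy a b with h | h | h
    · nlinarith
    · exact h
    · nlinarith
  -- bounds helpers
  have hupper : Bornology.IsBounded J → ∃ M : ℝ, ∀ y ∈ J, y ≤ M := by
    intro hbdd
    obtain ⟨M, hM⟩ := isBounded_iff_forall_norm_le.mp hbdd
    exact ⟨M, fun y hy => le_trans (le_abs_self y) (hM y hy)⟩
  have hlower : (0 : ℝ) ∉ closure J → ∃ ε : ℝ, 0 < ε ∧ ∀ y ∈ J, ε ≤ y := by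
    intro hcl
    by_contra h
    push_neg at h
    apply hcl
    rw [Metric.mem_closure_iff]
    intro ε hε
    obtain ⟨y, hy, hyε⟩ := h ε hε
    refine ⟨y, hy, ?_⟩
    rw [Real.dist_eq, abs_sub_comm, abs_of_pos (by linarith [hpos y hy])]
    linarith
  rcases aux_dichotomy hJI hfc hinj with hmono | hanti
  · -- increasing case
    obtain ⟨c, hc0, hcf⟩ := aux_inc J hJ hJI ⟨a0, ha0⟩ f hf hfc heq hmono
    have horbJ : ∀ n : ℕ, f^[n] a0 ∈ J := fun n => (hf.iterate n) ha0
    have hpowiter : ∀ n : ℕ, f^[n] a0 = c^n * a0 := by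
      intro n
      induction n with
      | zero => simp
      | succ k ih =>
        rw [Function.iterate_succ_apply' f k a0, hcf _ (horbJ k), ih]
        ring
    have ha00 : 0 < a0 := hpos a0 ha0
    have hcle : Bornology.IsBounded J → c ≤ 1 := by
      intro hbdd
      obtain ⟨M, hM⟩ := hupper hbdd
      by_contra hc1
      push_neg at hc1
      obtain ⟨n, hn⟩ := pow_unbounded_of_one_lt (M / a0) hc1
      have h1 := hM _ (horbJ n)
      rw [hpowiter n] at h1
      rw [div_lt_iff₀ ha00] at hn
      linarith
    have hcge : (0 : ℝ) ∉ closure J → 1 ≤ c := by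
      intro hcl
      obtain ⟨ε, hε0, hε⟩ := hlower hcl
      by_contra hc1
      push_neg at hc1
      obtain ⟨n, hn⟩ := exists_pow_lt_of_lt_one (div_pos hε0 ha00) hc1
      have h1 := hε _ (horbJ n)
      rw [hpowiter n] at h1
      rw [lt_div_iff₀ ha00] at hn
      linarith
    refine ⟨?_, ?_, ?_, ?_⟩
    · intro hbdd hcl x hx
      have h1 := hcle hbdd
      have h2 := hcge hcl
      have : c = 1 := le_antisymm h1 h2
      rw [hcf x hx, this, one_mul]
    · intro hbdd _
      exact ⟨c, ⟨hc0, hcle hbdd⟩, hcf⟩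
    · intro _ hcl
      exact ⟨c, hcge hcl, hcf⟩
    · intro _
      exact ⟨c, hc0, Or.inl hcf⟩
  · -- decreasing case
    obtain ⟨x₀, hx₀, hc0x⟩ := aux_anti_c0 J hJ f hf ⟨a0, ha0, b0, hb0, hab0⟩ hanti
    have hblow := aux_blowup J hJ f hf heq hx₀ hc0x
    have horbJ : ∀ n : ℕ, f^[n] x₀ ∈ J := fun n => (hf.iterate n) hx₀
    have hnotbdd : Bornology.IsBounded J → False := by
      intro hbdd
      obtain ⟨M, hM⟩ := hupper hbdd
      obtain ⟨n, hn⟩ := hblow.1 M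
      exact absurd (hM _ (horbJ n)) (not_le.mpr hn)
    refine ⟨fun hbdd _ => (hnotbdd hbdd).elim, fun hbdd _ => (hnotbdd hbdd).elim, ?_, ?_⟩
    · intro _ hcl
      exfalso
      obtain ⟨ε, hε0, hε⟩ := hlower hcl
      obtain ⟨n, hn⟩ := hblow.2 ε hε0
      exact absurd (hε _ (horbJ n)) (not_le.mpr hn)
    · intro hJeq
      subst hJeq
      obtain ⟨c, hcpos, hform⟩ := aux_anti_full f hf hfc heq hanti
      exact ⟨c, hcpos, Or.inr hform⟩
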